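/- Let R > 0 and let δv, δw : ℝ³ → ℝ³ be C¹ on a neighbourhood of the sphere S(0,R) with δv(x) = δw(x) for all x ∈ S(0,R). Then the Newtonian backreaction computed from the two fields coincides: ∫_{S(0,R)} [⟨δv(x), n(x)⟩ (Dδv(x))_{ab} − (Dδv(x)·δv(x))_a n_b(x)] dμH²(x) = ∫_{S(0,R)} [⟨δw(x), n(x)⟩ (Dδw(x))_{ab} − (Dδw(x)·δw(x))_a n_b(x)] dμH²(x) for all indices a, b. (The backreaction depends only on the boundary values of the velocity inhomogeneity; the normal derivative drops out by antisymmetrization.) -/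

import Mathlib

open MeasureTheory Real
open scoped RealInnerProductSpace ENNReal
noncomputable section

/-- ℝ³ with the Euclidean inner product. -/
abbrev E3 := EuclideanSpace ℝ (Fin 3)

lemma tangent_fderiv_eq (R : ℝ) (hR : 0 < R) (f g : E3 → E3)
    (hf : ∃ U : Set E3, IsOpen U ∧ Metric.sphere (0:E3) R ⊆ U ∧ ContDiffOn ℝ 1 f U)
    (hg : ∃ U : Set E3, IsOpen U ∧ Metric.sphere (0:E3) R ⊆ U ∧ ContDiffOn ℝ 1 g U)
    (heq : ∀ x ∈ Metric.sphere (0:E3) R, f x = g x)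
    {x : E3} (hx : x ∈ Metric.sphere (0:E3) R) {t : E3} (ht : ⟪t, x⟫ = 0) :
    fderiv ℝ f x t = fderiv ℝ g x t := by
  obtain ⟨U, hU, hsub, hfC⟩ := hf
  obtain ⟨V, hV, hvsub, hgC⟩ := hg
  have hxn : ‖x‖ = R := by simpa using mem_sphere_zero_iff_norm.mp hx
  set q : ℝ → ℝ := fun s => R ^ 2 + s ^ 2 * ‖t‖ ^ 2 with hq
  have hqpos : ∀ s, 0 < q s := fun s => by positivity
  have hnorm : ∀ s : ℝ, ‖x + s • t‖ = Real.sqrt (q s) := by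
    intro s
    have h1 : ‖x + s • t‖ ^ 2 = q s := by
      rw [norm_add_sq_real, real_inner_smul_right, real_inner_comm, ht, norm_smul, hxn]
      simp [hq, mul_pow]
    rw [← h1, Real.sqrt_sq (norm_nonneg _)]
  set γ : ℝ → E3 := fun s => (R / Real.sqrt (q s)) • (x + s • t) with hγ
  have hγmem : ∀ s, γ s ∈ Metric.sphere (0:E3) R := by
    intro s
    rw [mem_sphere_zero_iff_norm, hγ]
    simp only [norm_smul, hnorm]
    rw [Real.norm_eq_abs, abs_of_pos (by positivity), div_mul_cancel₀]
    exact (Real.sqrt_pos.mpr (hqpos s)).ne'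
  have hγ0 : γ 0 = x := by
    simp only [hγ, hq]
    norm_num [Real.sqrt_sq hR.le, div_self hR.ne']
  have hcurve : HasDerivAt γ t 0 := by
    have hqd : HasDerivAt q (2 * 0 ^ 1 * ‖t‖ ^ 2) 0 :=
      ((hasDerivAt_pow 2 (0:ℝ)).mul_const (‖t‖ ^ 2)).const_add (R ^ 2)
    have hsq : HasDerivAt (fun s => Real.sqrt (q s))
        ((1 / (2 * Real.sqrt (q 0))) * (2 * 0 ^ 1 * ‖t‖ ^ 2)) 0 :=
      (Real.hasDerivAt_sqrt (hqpos 0).ne').comp 0 hqd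
    have hφ : HasDerivAt (fun s => R / Real.sqrt (q s))
        (-(R * ((1 / (2 * Real.sqrt (q 0))) * (2 * 0 ^ 1 * ‖t‖ ^ 2)) / (Real.sqrt (q 0))^2)) 0 := by
      simpa [div_eq_mul_inv, mul_comm, mul_assoc, neg_div] using
        (hsq.inv (Real.sqrt_pos.mpr (hqpos 0)).ne').const_mul R
    have hc : HasDerivAt (fun s : ℝ => x + s • t) ((1:ℝ) • t) 0 :=
      ((hasDerivAt_id (0:ℝ)).smul_const t).const_add x
    have : HasDerivAt γ _ 0 := hφ.smul hc
    have hq0 : Real.sqrt (q 0) = R := by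
      simp [hq, Real.sqrt_sq hR.le]
    convert this using 1
    simp [hq0, div_self hR.ne']
  have hfd : DifferentiableAt ℝ f x :=
    ((hfC.differentiableOn one_ne_zero).differentiableAt (hU.mem_nhds (hsub hx)))
  have hgd : DifferentiableAt ℝ g x :=
    ((hgC.differentiableOn one_ne_zero).differentiableAt (hV.mem_nhds (hvsub hx)))
  have h1 : HasDerivAt (f ∘ γ) (fderiv ℝ f x t) 0 := by
    have := hfd.hasFDerivAt.comp_hasDerivAt_of_eq 0 hcurve hγ0.symm
    exact this
  have h2 : HasDerivAt (g ∘ γ) (fderiv ℝ g x t) 0 := by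
    exact hgd.hasFDerivAt.comp_hasDerivAt_of_eq 0 hcurve hγ0.symm
  have hcomp : f ∘ γ = g ∘ γ := funext fun s => heq _ (hγmem s)
  rw [hcomp] at h1
  exact h1.unique h2


/-- The Newtonian backreaction surface integral over the sphere `S(0,R)`
depends only on the boundary values of the velocity inhomogeneity: if two C¹
fields `δv`, `δw` agree on the sphere, then
`∫_{S(0,R)} [⟨δv,n⟩ (Dδv)_{ab} − (Dδv·δv)_a n_b] dμH²` computed from the two
fields coincide (the normal derivative drops out by antisymmetrization). -/
theorem backreaction_depends_only_on_boundary_values (R : ℝ) (hR : 0 < R)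
    (δv δw : E3 → E3)
    (hv : ∃ U : Set E3, IsOpen U ∧ Metric.sphere (0 : E3) R ⊆ U ∧
      ContDiffOn ℝ 1 δv U)
    (hw : ∃ U : Set E3, IsOpen U ∧ Metric.sphere (0 : E3) R ⊆ U ∧
      ContDiffOn ℝ 1 δw U)
    (heq : ∀ x ∈ Metric.sphere (0 : E3) R, δv x = δw x)
    (a b : Fin 3) :
    ∫ x in Metric.sphere (0 : E3) R,
      (⟪δv x, R⁻¹ • x⟫ * (fderiv ℝ δv x (EuclideanSpace.single b 1)) a
        - (fderiv ℝ δv x (δv x)) a * (R⁻¹ * x b)) ∂μH[2]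
    = ∫ x in Metric.sphere (0 : E3) R,
      (⟪δw x, R⁻¹ • x⟫ * (fderiv ℝ δw x (EuclideanSpace.single b 1)) a
        - (fderiv ℝ δw x (δw x)) a * (R⁻¹ * x b)) ∂μH[2] := by
  apply setIntegral_congr_fun Metric.isClosed_sphere.measurableSet
  intro x hx
  dsimp only
  have hxn : ‖x‖ = R := by simpa using mem_sphere_zero_iff_norm.mp hx
  have hx2 : ⟪x, x⟫ = R ^ 2 := by
    rw [real_inner_self_eq_norm_sq, hxn]
  set A := fderiv ℝ δv x with hA
  set B := fderiv ℝ δw x with hB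
  have key : ∀ u : E3, (A u) a
      = (B u) a + (⟪u, x⟫ / R ^ 2) * ((A x) a - (B x) a) := by
    intro u
    set c := ⟪u, x⟫ / R ^ 2 with hc
    have ht : ⟪u - c • x, x⟫ = 0 := by
      rw [inner_sub_left, real_inner_smul_left, hx2, hc]
      field_simp
      simp
    have htt : A (u - c • x) = B (u - c • x) :=
      tangent_fderiv_eq R hR δv δw hv hw heq hx ht
    have hu : u = (u - c • x) + c • x := by abel
    have e1 : (A u) a = (A (u - c • x)) a + c * (A x) a := by
      conv_lhs => rw [hu]
      rw [ContinuousLinearMap.map_add, ContinuousLinearMap.map_smul]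
      simp
    have e2 : (B u) a = (B (u - c • x)) a + c * (B x) a := by
      conv_lhs => rw [hu]
      rw [ContinuousLinearMap.map_add, ContinuousLinearMap.map_smul]
      simp
    rw [e1, e2, htt]
    ring
  have hvw : δv x = δw x := heq x hx
  rw [← hvw]
  rw [key (EuclideanSpace.single b 1), key (δv x)]
  have hsb : ⟪(EuclideanSpace.single b (1:ℝ) : E3), x⟫ = x b := by
    simp [EuclideanSpace.inner_single_left]
  rw [hsb, real_inner_smul_right]
  field_simp
  ring
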